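/- Let h: ℝ → ℝ be the function h(x) = -log(-q(x)) where q: ℝ^n → ℝ is a convex quadratic function and we restrict to a line where q < 0; then t ↦ -log(-q(x + tv)) is self-concordant, i.e., satisfies |h'''(t)| ≤ 2 h''(t)^{3/2} wherever defined. -/

import Mathlib

open RealInnerProductSpace


private lemma log_barrier_aux (A D P : ℝ) (hA : 0 ≤ A) (hP : P < 0) :
    |D * (6 * A * P - 2 * D ^ 2) / P ^ 3| ≤
      2 * ((D ^ 2 - 2 * A * P) / P ^ 2) ^ ((3 : ℝ) / 2) := by
  have hAP : 0 ≤ A * (-P) := mul_nonneg hA (by linarith)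
  set G : ℝ := (D ^ 2 - 2 * A * P) / P ^ 2 with hG
  have hGnn : 0 ≤ G := by
    apply div_nonneg _ (sq_nonneg _)
    nlinarith [sq_nonneg D]
  have hsq : (2 * G ^ ((3:ℝ)/2)) ^ 2 = 4 * G ^ 3 := by
    rw [mul_pow]
    have : (G ^ ((3:ℝ)/2)) ^ 2 = G ^ 3 := by
      rw [← Real.rpow_natCast (G ^ ((3:ℝ)/2)) 2, ← Real.rpow_mul hGnn,
        ← Real.rpow_natCast G 3]
      norm_num
    rw [this]; norm_num
  have hrhs_nn : 0 ≤ 2 * G ^ ((3:ℝ)/2) := by positivity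
  have h6 : (0 : ℝ) < P ^ 6 := by
    rw [show P ^ 6 = (-P) ^ 6 by ring]
    exact pow_pos (by linarith) 6
  have hA3 : 0 ≤ A ^ 3 * (-P) ^ 3 :=
    mul_nonneg (pow_nonneg hA 3) (pow_pos (by linarith : (0:ℝ) < -P) 3).le
  have hPne : P ≠ 0 := ne_of_lt hP
  have hcore : D ^ 2 * (6 * A * P - 2 * D ^ 2) ^ 2 ≤ 4 * (D ^ 2 - 2 * A * P) ^ 3 := by
    have hid : 4 * (D ^ 2 - 2 * A * P) ^ 3 - D ^ 2 * (6 * A * P - 2 * D ^ 2) ^ 2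
        = 12 * (D * A * P) ^ 2 + 32 * (A ^ 3 * (-P) ^ 3) := by ring
    linarith [sq_nonneg (D * A * P), hA3, hid]
  have hkey : (D * (6 * A * P - 2 * D ^ 2) / P ^ 3) ^ 2 ≤ 4 * G ^ 3 := by
    rw [hG]
    calc (D * (6 * A * P - 2 * D ^ 2) / P ^ 3) ^ 2
        = D ^ 2 * (6 * A * P - 2 * D ^ 2) ^ 2 / P ^ 6 := by
          field_simp
      _ ≤ 4 * (D ^ 2 - 2 * A * P) ^ 3 / P ^ 6 := by gcongr
      _ = 4 * ((D ^ 2 - 2 * A * P) / P ^ 2) ^ 3 := by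
          rw [div_pow, ← pow_mul, mul_div_assoc]
  calc |D * (6 * A * P - 2 * D ^ 2) / P ^ 3|
      = Real.sqrt ((D * (6 * A * P - 2 * D ^ 2) / P ^ 3) ^ 2) :=
        (Real.sqrt_sq_eq_abs _).symm
    _ ≤ Real.sqrt ((2 * G ^ ((3:ℝ)/2)) ^ 2) := by
        apply Real.sqrt_le_sqrt; rw [hsq]; exact hkey
    _ = 2 * G ^ ((3:ℝ)/2) := Real.sqrt_sq hrhs_nn

theorem log_barrier_quadratic_self_concordant {n : ℕ}
    (Q : EuclideanSpace ℝ (Fin n) →L[ℝ] EuclideanSpace ℝ (Fin n))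
    (hsym : ∀ u v, ⟪Q u, v⟫ = ⟪u, Q v⟫)
    (hpsd : ∀ u, 0 ≤ ⟪u, Q u⟫)
    (b : EuclideanSpace ℝ (Fin n)) (c : ℝ)
    (q : EuclideanSpace ℝ (Fin n) → ℝ)
    (hq : ∀ u, q u = ⟪u, Q u⟫ + ⟪b, u⟫ + c)
    (x v : EuclideanSpace ℝ (Fin n))
    (h : ℝ → ℝ)
    (hh : ∀ t, h t = -Real.log (-(q (x + t • v)))) :
    ∀ t : ℝ, q (x + t • v) < 0 →
      |deriv (deriv (deriv h)) t| ≤ 2 * (deriv (deriv h) t) ^ ((3 : ℝ) / 2) := by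
  intro t₀ ht₀
  set A : ℝ := ⟪v, Q v⟫ with hA_def
  set B : ℝ := ⟪x, Q v⟫ + ⟪v, Q x⟫ + ⟪b, v⟫ with hB_def
  set C : ℝ := ⟪x, Q x⟫ + ⟪b, x⟫ + c with hC_def
  set p : ℝ → ℝ := fun t => A * t ^ 2 + B * t + C with hp_def
  have hqt : ∀ t, q (x + t • v) = p t := by
    intro t
    simp only [hq, hp_def, hA_def, hB_def, hC_def, map_add, map_smul, inner_add_left,
      inner_add_right, real_inner_smul_left, real_inner_smul_right]
    ring
  have hA : 0 ≤ A := hpsd v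
  have hh' : ∀ t, h t = -Real.log (-(p t)) := by
    intro t; rw [hh, hqt]
  have hP₀ : p t₀ < 0 := by rw [← hqt]; exact ht₀
  have hpc : Continuous p := by fun_prop
  have hU : IsOpen {t : ℝ | p t < 0} := isOpen_lt hpc continuous_const
  -- derivative of p
  have hdp : ∀ t : ℝ, HasDerivAt p (2 * A * t + B) t := by
    intro t
    have h1 : HasDerivAt (fun t : ℝ => A * t ^ 2 + B * t + C)
        (A * (2 * t ^ 1) + B * 1) t :=
      (((hasDerivAt_pow 2 t).const_mul A).add ((hasDerivAt_id t).const_mul B)).add_const C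
    convert h1 using 1
    ring
  have hdu : ∀ t : ℝ, HasDerivAt (fun t : ℝ => 2 * A * t + B) (2 * A) t := by
    intro t
    have := ((hasDerivAt_id t).const_mul (2 * A)).add_const B
    simpa using this
  set g1 : ℝ → ℝ := fun t => -((2 * A * t + B) / p t) with hg1_def
  set g2 : ℝ → ℝ := fun t => ((2 * A * t + B) ^ 2 - 2 * A * p t) / (p t) ^ 2 with hg2_def
  set g3 : ℝ → ℝ :=
    fun t => ((2 * A * t + B) * (6 * A * p t - 2 * (2 * A * t + B) ^ 2)) / (p t) ^ 3 with hg3_def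
  have key1 : ∀ s : ℝ, p s < 0 → HasDerivAt h (g1 s) s := by
    intro s hs
    have hne : p s ≠ 0 := ne_of_lt hs
    have hneg : HasDerivAt (fun t => -(p t)) (-(2 * A * s + B)) s := (hdp s).neg
    have hne' : -(p s) ≠ 0 := by simpa using hne
    have hlog : HasDerivAt (fun t => Real.log (-(p t))) (-(2 * A * s + B) / -(p s)) s :=
      hneg.log hne'
    have : HasDerivAt (fun t => -Real.log (-(p t))) (-(-(2 * A * s + B) / -(p s))) s := hlog.neg
    have heq : HasDerivAt h (-(-(2 * A * s + B) / -(p s))) s := by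
      apply this.congr_of_eventuallyEq
      filter_upwards with t using (hh' t)
    convert heq using 1
    rw [hg1_def]
    field_simp
  have key2 : ∀ s : ℝ, p s < 0 → HasDerivAt g1 (g2 s) s := by
    intro s hs
    have hne : p s ≠ 0 := ne_of_lt hs
    have hdiv : HasDerivAt (fun t => (2 * A * t + B) / p t)
        ((2 * A * p s - (2 * A * s + B) * (2 * A * s + B)) / (p s) ^ 2) s :=
      (hdu s).div (hdp s) hne
    have := hdiv.neg
    refine this.congr_deriv ?_
    rw [hg2_def]
    field_simp
    ring
  have key3 : ∀ s : ℝ, p s < 0 → HasDerivAt g2 (g3 s) s := by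
    intro s hs
    have hne : p s ≠ 0 := ne_of_lt hs
    have hnum : HasDerivAt (fun t => (2 * A * t + B) ^ 2 - 2 * A * p t)
        (2 * (2 * A * s + B) ^ 1 * (2 * A) - 2 * A * (2 * A * s + B)) s :=
      ((hdu s).pow 2).sub ((hdp s).const_mul (2 * A))
    have hden : HasDerivAt (fun t => (p t) ^ 2) (2 * (p s) ^ 1 * (2 * A * s + B)) s :=
      (hdp s).pow 2
    have hdiv := hnum.div hden (by positivity)
    refine hdiv.congr_deriv ?_
    rw [hg3_def]
    field_simp
    ring
  have hmem : ∀ s : ℝ, p s < 0 → {t : ℝ | p t < 0} ∈ nhds s := fun s hs =>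
    hU.mem_nhds hs
  have d1 : ∀ s : ℝ, p s < 0 → deriv h s = g1 s := fun s hs => (key1 s hs).deriv
  have d2 : ∀ s : ℝ, p s < 0 → deriv (deriv h) s = g2 s := by
    intro s hs
    have e1 : deriv h =ᶠ[nhds s] g1 :=
      Filter.eventually_of_mem (hmem s hs) (fun t ht => d1 t ht)
    rw [e1.deriv_eq]
    exact (key2 s hs).deriv
  have d3 : deriv (deriv (deriv h)) t₀ = g3 t₀ := by
    have e2 : deriv (deriv h) =ᶠ[nhds t₀] g2 :=
      Filter.eventually_of_mem (hmem t₀ hP₀) (fun t ht => d2 t ht)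
    rw [e2.deriv_eq]
    exact (key3 t₀ hP₀).deriv
  rw [d3, d2 t₀ hP₀]
  set D : ℝ := 2 * A * t₀ + B with hD_def
  set P : ℝ := p t₀ with hP_def
  have hPneg : P < 0 := hP₀
  have hv2 : g2 t₀ = (D ^ 2 - 2 * A * P) / P ^ 2 := by
    simp only [hg2_def]
    rfl
  have hv3 : g3 t₀ = D * (6 * A * P - 2 * D ^ 2) / P ^ 3 := by
    simp only [hg3_def]
    rfl
  rw [hv2, hv3]
  exact log_barrier_aux A D P hA hPneg
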